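/- Let (S,L) be a Lie-Rinehart algebra over R, U its enveloping algebra, and M a left module over U ⊗_R U^op (a U-bimodule). Define M^S = {m ∈ M : s·m = m·s for all s ∈ S}. Then for m ∈ M^S and α ∈ L, the element α·m − m·α again lies in M^S, and the resulting operations s ⋆ m = s·m (s ∈ S) and α ⋆ m = α·m − m·α (α ∈ L) make M^S a left U-module: α ⋆ (s ⋆ m) = ∂_α(s) ⋆ m + s ⋆ (α ⋆ m) and s ⋆ (α ⋆ m) = (sα) ⋆ m. -/
import Mathlib


open MulOpposite

/-- Let `(S,L)` be a Lie-Rinehart algebra over `R` with enveloping algebra `U`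
(encoded by `ιS`, `ιL` and the defining relations), and let `M` be a `U`-bimodule (a left
`U`-module and a left `Uᵐᵒᵖ`-module with commuting actions).  Set
`M^S = {m : s·m = m·s for all s ∈ S}`.  Then for `m ∈ M^S` and `α ∈ L`, the element
`α·m − m·α` again lies in `M^S`, and the operations `s ⋆ m = s·m`,
`α ⋆ m = α·m − m·α` satisfy the left `U`-module laws
`α ⋆ (s ⋆ m) = ∂_α(s) ⋆ m + s ⋆ (α ⋆ m)` and `s ⋆ (α ⋆ m) = (sα) ⋆ m`. -/
theorem stmt13 {R S L U M : Type*} [CommRing R] [CommRing S] [Algebra R S]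
    [LieRing L] [LieAlgebra R L] [Module S L] [Ring U] [Algebra R U]
    [AddCommGroup M] [Module U M] [Module Uᵐᵒᵖ M] [SMulCommClass U Uᵐᵒᵖ M]
    (D : L → Derivation R S S)
    (ιS : S →ₐ[R] U) (ιL : L →ₗ[R] U)
    (hrel1 : ∀ α β : L, ιL ⁅α, β⁆ = ιL α * ιL β - ιL β * ιL α)
    (hrel2 : ∀ (s : S) (α : L), ιL (s • α) = ιS s * ιL α)
    (hrel3 : ∀ (α : L) (s : S), ιL α * ιS s - ιS s * ιL α = ιS (D α s)) :
    ∀ m : M, (∀ s : S, ιS s • m = op (ιS s) • m) →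
      ∀ α : L,
        (∀ s : S, ιS s • (ιL α • m - op (ιL α) • m)
            = op (ιS s) • (ιL α • m - op (ιL α) • m)) ∧
        (∀ s : S, ιL α • (ιS s • m) - op (ιL α) • (ιS s • m)
            = ιS (D α s) • m + ιS s • (ιL α • m - op (ιL α) • m)) ∧
        (∀ s : S, ιS s • (ιL α • m - op (ιL α) • m)
            = ιL (s • α) • m - op (ιL (s • α)) • m) := by
  intro m hm α
  have key : ∀ s : S, ιL α * ιS s = ιS (D α s) + ιS s * ιL α := by
    intro s; rw [← hrel3 α s]; abel
  have lhs : ∀ s : S, ιS s • (ιL α • m - op (ιL α) • m)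
      = (ιS s * ιL α) • m - op (ιS s * ιL α) • m := by
    intro s
    rw [smul_sub, smul_smul, smul_comm, hm s, smul_smul, ← op_mul]
  have e1 : ∀ s : S, ιL α • ιS s • m = ιS (D α s) • m + (ιS s * ιL α) • m := by
    intro s; rw [smul_smul, key s, add_smul]
  have e2 : ∀ s : S, op (ιL α) • ιS s • m = op (ιS s * ιL α) • m := by
    intro s; rw [hm s, smul_smul, ← op_mul]
  have e3 : ∀ s : S, op (ιS s) • ιL α • m = ιS (D α s) • m + (ιS s * ιL α) • m := by
    intro s
    rw [← smul_comm (ιL α) (op (ιS s)) m, ← hm s, smul_smul, key s, add_smul]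
  have e4 : ∀ s : S, op (ιS s) • op (ιL α) • m
      = ιS (D α s) • m + op (ιS s * ιL α) • m := by
    intro s
    rw [smul_smul, ← op_mul, key s, op_add, add_smul, ← hm (D α s)]
  refine ⟨?_, ?_, ?_⟩
  · intro s
    rw [lhs s, smul_sub, e3 s, e4 s]
    abel
  · intro s
    rw [lhs s, e1 s, e2 s]
    abel
  · intro s
    rw [lhs s, hrel2 s α]
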